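/- Let S = ⟨β̄₀, β̄₁, …, β̄_g⟩ ⊆ ℕ be a numerical semigroup generated by positive integers with β̄₀ < β̄₁, and set e_i = gcd(β̄₀,…,β̄_i), n_i = e_{i−1}/e_i. If n_i·β̄_i < β̄_{i+1} and n_i·β̄_i ∈ ⟨β̄₀,…,β̄_{i−1}⟩ for all admissible i, and n_i > 1 for all 1 ≤ i ≤ g, then the generators β̄₀,…,β̄_g form a minimal generating set of S, i.e. no β̄_j lies in the semigroup generated by the others. -/

import Mathlib

/-- The maximal contact values `β̄₀, …, β̄_g` minimally generate the value
semigroup `S = ⟨β̄₀,…,β̄_g⟩`: no `β̄_j` lies in the submonoid generated by the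
other generators. -/
theorem stmt7 (g : ℕ) (β e nn : ℕ → ℕ)
    (hβpos : ∀ i, i ≤ g → 0 < β i)
    (hβ01 : β 0 < β 1)
    (he : ∀ i, i ≤ g → e i = Finset.gcd (Finset.range (i + 1)) β)
    (hn : ∀ i, 1 ≤ i → i ≤ g → nn i * e i = e (i - 1))
    (hlt : ∀ i, 1 ≤ i → i + 1 ≤ g → nn i * β i < β (i + 1))
    (hmem : ∀ i, 1 ≤ i → i ≤ g →
      nn i * β i ∈ AddSubmonoid.closure {x : ℕ | ∃ t, t < i ∧ x = β t})
    (hn1 : ∀ i, 1 ≤ i → i ≤ g → 1 < nn i) :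
    ∀ j, j ≤ g → β j ∉ AddSubmonoid.closure {x : ℕ | ∃ i, i ≤ g ∧ i ≠ j ∧ x = β i} := by
  -- gcd over a superset divides gcd over a subset
  have hgcdsub : ∀ {s t : Finset ℕ}, s ⊆ t → Finset.gcd t β ∣ Finset.gcd s β :=
    fun h => Finset.dvd_gcd fun b hb => Finset.gcd_dvd (h hb)
  -- β is strictly increasing on [0, g]
  have hstep : ∀ i, i + 1 ≤ g → β i < β (i + 1) := by
    intro i hi
    rcases Nat.eq_zero_or_pos i with rfl | hi1
    · exact hβ01
    · have hpos : 0 < nn i := lt_trans one_pos (hn1 i hi1 (le_trans (Nat.le_succ i) hi))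
      have hle : β i ≤ nn i * β i := Nat.le_mul_of_pos_left (β i) hpos
      exact lt_of_le_of_lt hle (hlt i hi1 hi)
  have hmono : ∀ m k, m < k → k ≤ g → β m < β k := by
    intro m k hmk hk
    induction k with
    | zero => omega
    | succ n ih =>
      rcases Nat.lt_succ_iff_lt_or_eq.mp hmk with h | h
      · exact lt_trans (ih h (by omega)) (hstep n hk)
      · subst h; exact hstep m hk
  intro j hj hjmem
  -- invariant for elements of the closure
  have key : ∀ x ∈ AddSubmonoid.closure {x : ℕ | ∃ i, i ≤ g ∧ i ≠ j ∧ x = β i},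
      x = 0 ∨ ∃ m, m ≤ g ∧ m ≠ j ∧ β m ≤ x ∧
        Finset.gcd (Finset.range (m + 1)) β ∣ x := by
    intro x hx
    induction hx using AddSubmonoid.closure_induction with
    | mem y hy =>
      obtain ⟨i, hig, hij, rfl⟩ := hy
      exact Or.inr ⟨i, hig, hij, le_refl _,
        Finset.gcd_dvd (Finset.mem_range.mpr (Nat.lt_succ_self i))⟩
    | zero => exact Or.inl rfl
    | add y z hy hz ihy ihz =>
      rcases ihy with rfl | ⟨m1, hm1g, hm1j, hm1le, hm1dvd⟩
      · simpa using ihz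
      rcases ihz with rfl | ⟨m2, hm2g, hm2j, hm2le, hm2dvd⟩
      · exact Or.inr ⟨m1, hm1g, hm1j, by simpa using hm1le, by simpa using hm1dvd⟩
      rcases le_total m1 m2 with h | h
      · refine Or.inr ⟨m2, hm2g, hm2j, le_trans hm2le (Nat.le_add_left _ _), ?_⟩
        exact Dvd.dvd.add (dvd_trans (hgcdsub (by
          intro b hb; simp only [Finset.mem_range] at *; omega)) hm1dvd) hm2dvd
      · refine Or.inr ⟨m1, hm1g, hm1j, le_trans hm1le (Nat.le_add_right _ _), ?_⟩
        exact Dvd.dvd.add hm1dvd (dvd_trans (hgcdsub (by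
          intro b hb; simp only [Finset.mem_range] at *; omega)) hm2dvd)
  rcases key _ hjmem with h0 | ⟨m, hmg, hmj, hmle, hmdvd⟩
  · exact absurd h0 (by have := hβpos j hj; omega)
  · -- m < j, since β m ≤ β j and β strictly increasing
    have hmltj : m < j := by
      rcases lt_trichotomy m j with h | h | h
      · exact h
      · exact absurd h hmj
      · exact absurd hmle (not_le.mpr (hmono j m h hmg))
    have hj1 : 1 ≤ j := by omega
    -- e (j-1) divides β j
    have hdvd1 : Finset.gcd (Finset.range j) β ∣ β j :=
      dvd_trans (hgcdsub (by intro b hb; simp only [Finset.mem_range] at *; omega)) hmdvd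
    -- hence e (j-1) ∣ e j
    have hdvd2 : Finset.gcd (Finset.range j) β ∣ Finset.gcd (Finset.range (j + 1)) β := by
      refine Finset.dvd_gcd fun b hb => ?_
      simp only [Finset.mem_range] at hb
      rcases Nat.lt_succ_iff_lt_or_eq.mp hb with h | h
      · exact Finset.gcd_dvd (Finset.mem_range.mpr h)
      · subst h; exact hdvd1
    have hdvd3 : Finset.gcd (Finset.range (j + 1)) β ∣ Finset.gcd (Finset.range j) β :=
      hgcdsub (by intro b hb; simp only [Finset.mem_range] at *; omega)
    have heq : Finset.gcd (Finset.range (j + 1)) β = Finset.gcd (Finset.range j) β :=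
      Nat.dvd_antisymm hdvd3 hdvd2
    -- e j > 0 since it divides β 0 > 0
    have hepos : 0 < Finset.gcd (Finset.range (j + 1)) β := by
      rcases Nat.eq_zero_or_pos (Finset.gcd (Finset.range (j + 1)) β) with h | h
      · have := Finset.gcd_dvd (f := β) (Finset.mem_range.mpr (Nat.succ_pos j))
        rw [h] at this
        exact absurd (Nat.eq_zero_of_zero_dvd this) (by have := hβpos 0 (Nat.zero_le g); omega)
      · exact h
    have hnj := hn j hj1 hj
    rw [he j hj, he (j - 1) (by omega)] at hnj
    have hj1eq : j - 1 + 1 = j := by omega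
    rw [hj1eq] at hnj
    rw [heq] at hnj
    have hpos : 0 < (Finset.range j).gcd β := heq ▸ hepos
    have h2 : 1 < nn j := hn1 j hj1 hj
    nlinarith [hnj, hpos, h2]
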